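/- The improper integral of -log(1-x)/(x(1-x)) over the interval (0, 1/2) equals pi^2/12. (This is the evaluation of I_1 + I_2, up to the scale factor 3, which yields the paper's computation that the Masur--Veech volume of the unit tangent bundle of the modular surface equals pi^2/6.) -/

import Mathlib

open MeasureTheory Real

namespace Aux

open Set Filter


/-- integrability of `-log(1-x)/x` on `(0,1/2)` -/
lemma integrableOn_f1 : IntegrableOn (fun x : ℝ => -Real.log (1 - x) / x) (Ioo 0 (1/2)) := by
  have hmeas : AEStronglyMeasurable (fun x : ℝ => -Real.log (1 - x) / x)
      (volume.restrict (Ioo (0:ℝ) (1/2))) := by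
    apply ContinuousOn.aestronglyMeasurable _ measurableSet_Ioo
    apply ContinuousOn.div
    · exact ((Real.continuousOn_log.comp (continuous_const.sub continuous_id).continuousOn
        (fun x hx => by simp only [mem_compl_iff, mem_singleton_iff, id_eq, Pi.sub_apply]; nlinarith [hx.2])).neg)
    · exact continuousOn_id
    · exact fun x hx => ne_of_gt hx.1
  refine Integrable.mono' (integrable_const 2) hmeas ?_
  filter_upwards [ae_restrict_mem measurableSet_Ioo] with x hx
  obtain ⟨hx0, hx2⟩ := hx
  have h1x : (0:ℝ) < 1 - x := by linarith
  have hlog : -Real.log (1 - x) ≤ x / (1 - x) := by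
    have := Real.log_le_sub_one_of_pos (x := (1 - x)⁻¹) (by positivity)
    rw [Real.log_inv] at this
    have : -Real.log (1 - x) ≤ (1 - x)⁻¹ - 1 := this
    calc -Real.log (1 - x) ≤ (1-x)⁻¹ - 1 := this
      _ = x / (1 - x) := by field_simp; ring
  have hlog0 : 0 ≤ -Real.log (1 - x) := by
    have : Real.log (1 - x) ≤ 0 := Real.log_nonpos (by linarith) (by linarith)
    linarith
  have hb : -Real.log (1 - x) / x ≤ 2 := by
    rw [div_le_iff₀ hx0]
    calc -Real.log (1 - x) ≤ x / (1 - x) := hlog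
      _ ≤ x / (1/2) := by
          apply div_le_div_of_nonneg_left hx0.le (by norm_num) (by linarith)
      _ = 2 * x := by ring
  rw [Real.norm_eq_abs, abs_of_nonneg (by positivity)]
  exact hb

lemma integrableOn_f2 : IntegrableOn (fun x : ℝ => -Real.log (1 - x) / (1 - x)) (Ioo 0 (1/2)) := by
  have : ContinuousOn (fun x : ℝ => -Real.log (1 - x) / (1 - x)) (Icc 0 (1/2)) := by
    apply ContinuousOn.div
    · exact ((Real.continuousOn_log.comp (continuous_const.sub continuous_id).continuousOn
        (fun x hx => by simp only [mem_compl_iff, mem_singleton_iff, id_eq, Pi.sub_apply]; nlinarith [hx.2])).neg)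
    · exact (continuous_const.sub continuous_id).continuousOn
    · exact fun x hx => by nlinarith [hx.2]
  exact (this.integrableOn_Icc).mono_set Ioo_subset_Icc_self



lemma hasSum_A : HasSum (fun n : ℕ => (1/2:ℝ)^(n+1) / ((n:ℝ)+1)^2)
    (∫ x in Ioo (0:ℝ) (1/2), -Real.log (1 - x) / x) := by
  have hFint : ∀ n : ℕ, Integrable (fun x : ℝ => x^n / ((n:ℝ)+1))
      (volume.restrict (Ioo (0:ℝ) (1/2))) := fun n =>
    (((continuous_pow n).div_const _).integrableOn_Icc (a := (0:ℝ)) (b := 1/2)).mono_set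
      Ioo_subset_Icc_self
  have e1 : ∀ n : ℕ, (∫ x in Ioo (0:ℝ) (1/2), x^n / ((n:ℝ)+1))
      = (1/2:ℝ)^(n+1) / ((n:ℝ)+1)^2 := by
    intro n
    rw [integral_div, ← integral_Ioc_eq_integral_Ioo,
      ← intervalIntegral.integral_of_le (by norm_num : (0:ℝ) ≤ 1/2), integral_pow]
    rw [zero_pow (Nat.succ_ne_zero n), sub_zero, div_div, ← sq]
  have hnorm : Summable (fun n : ℕ => ∫ x in Ioo (0:ℝ) (1/2), ‖x^n / ((n:ℝ)+1)‖) := by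
    have heq : ∀ n : ℕ, (∫ x in Ioo (0:ℝ) (1/2), ‖x^n / ((n:ℝ)+1)‖)
        = (1/2:ℝ)^(n+1) / ((n:ℝ)+1)^2 := by
      intro n
      rw [← e1 n]
      apply setIntegral_congr_fun measurableSet_Ioo
      intro x hx
      have hx0 : (0:ℝ) ≤ x := le_of_lt hx.1
      simp only [Real.norm_eq_abs]
      rw [abs_of_nonneg (by positivity)]
    simp only [heq]
    apply Summable.of_nonneg_of_le (fun n => by positivity)
      (fun n => ?_) (summable_geometric_two.mul_left (1/2))
    have h1 : ((1:ℝ)/2)^(n+1) = 1/2 * (1/2)^n := by rw [pow_succ']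
    rw [h1]
    have : (1:ℝ) ≤ ((n:ℝ)+1)^2 := by nlinarith [Nat.cast_nonneg (α := ℝ) n]
    calc (1:ℝ)/2 * (1/2)^n / ((n:ℝ)+1)^2 ≤ 1/2 * (1/2)^n / 1 := by
          apply div_le_div_of_nonneg_left (by positivity) (by norm_num) this
      _ = 1/2 * (1/2)^n := by rw [div_one]
  have key := hasSum_integral_of_summable_integral_norm hFint hnorm
  have e2 : (∫ x in Ioo (0:ℝ) (1/2), (∑' n : ℕ, x^n / ((n:ℝ)+1)))
      = ∫ x in Ioo (0:ℝ) (1/2), -Real.log (1 - x) / x := by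
    apply setIntegral_congr_fun measurableSet_Ioo
    intro x hx
    obtain ⟨hx0, hx2⟩ := hx
    have hlt : |x| < 1 := by rw [abs_of_pos hx0]; linarith
    have h := (Real.hasSum_pow_div_log_of_abs_lt_one hlt).mul_right x⁻¹
    have heq : (fun n : ℕ => x^(n+1) / ((n:ℝ)+1) * x⁻¹) = fun n : ℕ => x^n / ((n:ℝ)+1) := by
      funext n
      rw [pow_succ]
      field_simp
    rw [heq] at h
    show (∑' n : ℕ, x^n / ((n:ℝ)+1)) = -Real.log (1 - x) / x
    rw [h.tsum_eq, div_eq_mul_inv]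
  rw [e2] at key
  simpa only [e1] using key



lemma termC (n : ℕ) : (∫ x in Ioo (1/2:ℝ) 1, x^n * (-Real.log x))
    = 1/((n:ℝ)+1)^2 - (1/2:ℝ)^(n+1)/((n:ℝ)+1)^2 - Real.log 2 * ((1/2:ℝ)^(n+1)/((n:ℝ)+1)) := by
  have hne : ((n:ℝ)+1) ≠ 0 := by positivity
  rw [← integral_Ioc_eq_integral_Ioo,
    ← intervalIntegral.integral_of_le (by norm_num : (1/2:ℝ) ≤ 1)]
  have hderiv : ∀ x ∈ Set.uIcc (1/2:ℝ) 1,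
      HasDerivAt (fun y : ℝ => y^(n+1)/((n:ℝ)+1)^2 - y^(n+1) * Real.log y/((n:ℝ)+1))
        (x^n * (-Real.log x)) x := by
    intro x hx
    rw [Set.uIcc_of_le (by norm_num : (1/2:ℝ) ≤ 1)] at hx
    have hx0 : (0:ℝ) < x := by linarith [hx.1]
    have h1 : HasDerivAt (fun y : ℝ => y^(n+1)) (((n:ℝ)+1) * x^n) x := by
      simpa using hasDerivAt_pow (n+1) x
    have h2 : HasDerivAt Real.log x⁻¹ x := Real.hasDerivAt_log hx0.ne'
    have h4 := (h1.div_const (((n:ℝ)+1)^2)).sub ((h1.mul h2).div_const ((n:ℝ)+1))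
    refine HasDerivAt.congr_deriv h4 ?_
    field_simp
    ring
  rw [intervalIntegral.integral_eq_sub_of_hasDerivAt hderiv ?_]
  · have hl : Real.log (1/2 : ℝ) = -Real.log 2 := by
      rw [one_div, Real.log_inv]
    rw [Real.log_one, hl]
    rw [one_pow]
    ring
  · apply ContinuousOn.intervalIntegrable
    apply ContinuousOn.mul (continuous_pow n).continuousOn
    apply ContinuousOn.neg
    apply Real.continuousOn_log.mono
    intro x hx
    rw [Set.uIcc_of_le (by norm_num : (1/2:ℝ) ≤ 1)] at hx
    simp only [mem_compl_iff, mem_singleton_iff]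
    intro h; rw [h] at hx; norm_num at hx

lemma hasSum_zeta' : HasSum (fun n : ℕ => 1/((n:ℝ)+1)^2) (Real.pi^2/6) := by
  have hv : ∀ x ∉ Set.range Nat.succ, (1:ℝ)/(x:ℝ)^2 = 0 := by
    intro x hx
    have : x = 0 := by
      rcases Nat.eq_zero_or_pos x with h | h
      · exact h
      · exact absurd ⟨x - 1, Nat.succ_pred_eq_of_pos h⟩ hx
    simp [this]
  have := (Function.Injective.hasSum_iff Nat.succ_injective hv).2 hasSum_zeta_two
  have heq : ((fun x : ℕ => ((1:ℝ)/(x:ℝ)^2)) ∘ Nat.succ) = fun n : ℕ => 1/((n:ℝ)+1)^2 := by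
    funext n
    simp only [Function.comp_apply]
    push_cast
    ring
  rwa [heq] at this

lemma hasSum_log2 : HasSum (fun n : ℕ => (1/2:ℝ)^(n+1)/((n:ℝ)+1)) (Real.log 2) := by
  have h := Real.hasSum_pow_div_log_of_abs_lt_one (x := (1/2:ℝ)) (by rw [abs_of_pos] <;> norm_num)
  have : -Real.log (1 - 1/2 : ℝ) = Real.log 2 := by
    norm_num
    rw [one_div, Real.log_inv]
    ring
  rwa [this] at h




lemma integral_C : (∫ x in Ioo (1/2:ℝ) 1, -Real.log x / (1 - x))
    = Real.pi^2/6 - (∫ x in Ioo (0:ℝ) (1/2), -Real.log (1 - x) / x)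
      - Real.log 2 * Real.log 2 := by
  have hFint : ∀ n : ℕ, Integrable (fun x : ℝ => x^n * (-Real.log x))
      (volume.restrict (Ioo (1/2:ℝ) 1)) := by
    intro n
    have hc : ContinuousOn (fun x : ℝ => x^n * (-Real.log x)) (Icc (1/2:ℝ) 1) := by
      apply ContinuousOn.mul (continuous_pow n).continuousOn
      apply ContinuousOn.neg
      apply Real.continuousOn_log.mono
      intro x hx
      simp only [mem_compl_iff, mem_singleton_iff]
      intro h; rw [h] at hx; exact absurd hx.1 (by norm_num)
    exact hc.integrableOn_Icc.mono_set Ioo_subset_Icc_self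
  have hnn : ∀ n : ℕ, ∀ x ∈ Ioo (1/2:ℝ) 1, 0 ≤ x^n * (-Real.log x) := by
    intro n x hx
    have h1 : Real.log x ≤ 0 := Real.log_nonpos (by linarith [hx.1]) hx.2.le
    have h2 : (0:ℝ) ≤ x^n := pow_nonneg (by linarith [hx.1]) n
    nlinarith
  have hnormEq : ∀ n : ℕ, (∫ x in Ioo (1/2:ℝ) 1, ‖x^n * (-Real.log x)‖)
      = ∫ x in Ioo (1/2:ℝ) 1, x^n * (-Real.log x) := by
    intro n
    apply setIntegral_congr_fun measurableSet_Ioo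
    intro x hx
    simp only [Real.norm_eq_abs]
    rw [abs_of_nonneg (hnn n x hx)]
  have hnorm : Summable (fun n : ℕ => ∫ x in Ioo (1/2:ℝ) 1, ‖x^n * (-Real.log x)‖) := by
    apply Summable.of_nonneg_of_le (fun n => by positivity) (fun n => ?_)
      hasSum_zeta'.summable
    rw [hnormEq n, termC n]
    have h2 : (0:ℝ) < Real.log 2 := Real.log_pos (by norm_num)
    have h3 : (0:ℝ) < (1/2:ℝ)^(n+1)/((n:ℝ)+1)^2 := by positivity
    have h4 : (0:ℝ) < (1/2:ℝ)^(n+1)/((n:ℝ)+1) := by positivity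
    nlinarith
  have key := hasSum_integral_of_summable_integral_norm hFint hnorm
  have e2 : (∫ x in Ioo (1/2:ℝ) 1, (∑' n : ℕ, x^n * (-Real.log x)))
      = ∫ x in Ioo (1/2:ℝ) 1, -Real.log x / (1 - x) := by
    apply setIntegral_congr_fun measurableSet_Ioo
    intro x hx
    have h := (hasSum_geometric_of_lt_one (by linarith [hx.1] : (0:ℝ) ≤ x) hx.2).mul_right
      (-Real.log x)
    show (∑' n : ℕ, x^n * (-Real.log x)) = -Real.log x / (1 - x)
    rw [h.tsum_eq, div_eq_mul_inv, mul_comm]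
  rw [e2] at key
  have hsum : HasSum (fun n : ℕ => 1/((n:ℝ)+1)^2 - (1/2:ℝ)^(n+1)/((n:ℝ)+1)^2
        - Real.log 2 * ((1/2:ℝ)^(n+1)/((n:ℝ)+1)))
      (Real.pi^2/6 - (∫ x in Ioo (0:ℝ) (1/2), -Real.log (1 - x) / x)
        - Real.log 2 * Real.log 2) :=
    (hasSum_zeta'.sub hasSum_A).sub (hasSum_log2.mul_left (Real.log 2))
  have keyf : HasSum (fun n : ℕ => 1/((n:ℝ)+1)^2 - (1/2:ℝ)^(n+1)/((n:ℝ)+1)^2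
        - Real.log 2 * ((1/2:ℝ)^(n+1)/((n:ℝ)+1)))
      (∫ x in Ioo (1/2:ℝ) 1, -Real.log x / (1 - x)) := by
    simpa only [termC] using key
  exact keyf.unique hsum

lemma subst_C : (∫ x in Ioo (1/2:ℝ) 1, -Real.log x / (1 - x))
    = ∫ x in Ioo (0:ℝ) (1/2), -Real.log (1 - x) / x := by
  rw [← integral_Ioc_eq_integral_Ioo, ← integral_Ioc_eq_integral_Ioo,
    ← intervalIntegral.integral_of_le (by norm_num : (1/2:ℝ) ≤ 1),
    ← intervalIntegral.integral_of_le (by norm_num : (0:ℝ) ≤ 1/2)]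
  have h := intervalIntegral.integral_comp_sub_left (a := (0:ℝ)) (b := 1/2)
    (fun x => -Real.log x / (1 - x)) 1
  norm_num at h
  rw [← h]




lemma A_value : (∫ x in Ioo (0:ℝ) (1/2), -Real.log (1 - x) / x)
    = Real.pi^2/12 - Real.log 2 ^ 2 / 2 := by
  have h := integral_C
  rw [subst_C] at h
  have hsq : Real.log 2 * Real.log 2 = Real.log 2 ^ 2 := (sq (Real.log 2)).symm
  linarith

lemma integral_f2 : (∫ x in Ioo (0:ℝ) (1/2), -Real.log (1 - x) / (1 - x))
    = Real.log 2 ^ 2 / 2 := by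
  rw [← integral_Ioc_eq_integral_Ioo,
    ← intervalIntegral.integral_of_le (by norm_num : (0:ℝ) ≤ 1/2)]
  have hderiv : ∀ x ∈ Set.uIcc (0:ℝ) (1/2),
      HasDerivAt (fun y : ℝ => Real.log (1 - y)^2/2) (-Real.log (1 - x) / (1 - x)) x := by
    intro x hx
    rw [Set.uIcc_of_le (by norm_num : (0:ℝ) ≤ 1/2)] at hx
    have h1x : (0:ℝ) < 1 - x := by linarith [hx.2]
    have h1 : HasDerivAt (fun y : ℝ => 1 - y) (-1) x := by
      simpa using (hasDerivAt_id x).const_sub 1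
    have h2 : HasDerivAt (fun y : ℝ => Real.log (1 - y)) ((1-x)⁻¹ * (-1)) x :=
      (Real.hasDerivAt_log h1x.ne').comp x h1
    have h3 := (h2.pow 2).div_const 2
    refine HasDerivAt.congr_deriv h3 ?_
    field_simp
    ring
  rw [intervalIntegral.integral_eq_sub_of_hasDerivAt hderiv ?_]
  · norm_num
    rw [one_div, Real.log_inv]
    ring
  · apply ContinuousOn.intervalIntegrable
    apply ContinuousOn.div
    · apply ContinuousOn.neg
      apply Real.continuousOn_log.comp (continuous_const.sub continuous_id).continuousOn
      intro x hx
      rw [Set.uIcc_of_le (by norm_num : (0:ℝ) ≤ 1/2)] at hx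
      simp only [mem_compl_iff, mem_singleton_iff, id_eq, Pi.sub_apply]
      intro h; have : x = 1 := by linarith [sub_eq_zero.mp h]
      rw [this] at hx; exact absurd hx.2 (by norm_num)
    · exact (continuous_const.sub continuous_id).continuousOn
    · intro x hx
      rw [Set.uIcc_of_le (by norm_num : (0:ℝ) ≤ 1/2)] at hx
      intro h
      have : x = 1 := by linarith [sub_eq_zero.mp h]
      rw [this] at hx; exact absurd hx.2 (by norm_num)

theorem integral_neg_log_one_sub_div_self_mul_one_sub' :
    ∫ x in Set.Ioo (0 : ℝ) (1 / 2), -Real.log (1 - x) / (x * (1 - x))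
      = Real.pi ^ 2 / 12 := by
  have hsplit : EqOn (fun x : ℝ => -Real.log (1 - x) / (x * (1 - x)))
      (fun x : ℝ => -Real.log (1 - x) / x + -Real.log (1 - x) / (1 - x))
      (Ioo (0:ℝ) (1/2)) := by
    intro x hx
    have hx0 : (0:ℝ) < x := hx.1
    have h1x : (0:ℝ) < 1 - x := by linarith [hx.2]
    field_simp
    ring
  rw [setIntegral_congr_fun measurableSet_Ioo hsplit,
    integral_add integrableOn_f1 integrableOn_f2, A_value, integral_f2]
  ring

end Aux

/-- The improper integral of `-log(1-x)/(x(1-x))` over `(0, 1/2)` equals `π²/12`. -/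
theorem integral_neg_log_one_sub_div_self_mul_one_sub :
    ∫ x in Set.Ioo (0 : ℝ) (1 / 2), -Real.log (1 - x) / (x * (1 - x))
      = Real.pi ^ 2 / 12 := by
  exact Aux.integral_neg_log_one_sub_div_self_mul_one_sub'
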